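/- Let α, β be complex numbers with β ≠ 0 and ε = |exp(β) − α| > 0, let E > 1 be a real number, K ≥ 1 and L ≥ 2 integers, and μ ≥ 0 an integer. Define w_{k,ℓ} = ((α^ℓ − e^{βℓ})/ε)·Σ_{j=0}^{min(μ,k)} C(μ,j)·(k!·ℓ^{μ−j}/(k−j)!)·β^{k−j} and Φ_{k,ℓ}(z) = z^k e^{ℓz}. Set 𝒩 = max{ E·|β|·L , log(L−1) + (L−1)·log(e^{|β|} + ε) } + log((K−1)!) + (μ+1)·log(L+1) + log 2. Then max{ Σ_{k=0}^{K−1} Σ_{ℓ=0}^{L−1} max_{|z| = E} |Φ_{k,ℓ}^{(μ)}(zβ)| , Σ_{k=0}^{K−1} Σ_{ℓ=0}^{L−1} |w_{k,ℓ}| } ≤ e^{𝒩}. -/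

import Mathlib

/-- `Φ_{k,ℓ}(z) = z^k e^{ℓz}`. -/
noncomputable def Phi (k ℓ : ℕ) (z : ℂ) : ℂ := z ^ k * Complex.exp (ℓ * z)

/-- The numbers `w_{k,ℓ} = ((α^ℓ − e^{βℓ})/ε) ∑_{j=0}^{min(μ,k)} C(μ,j) (k! ℓ^{μ−j}/(k−j)!) β^{k−j}`,
where `ε = |exp β − α|`. -/
noncomputable def wNum (α β : ℂ) (μ k ℓ : ℕ) : ℂ :=
  ((α ^ ℓ - Complex.exp (β * ℓ)) / (‖Complex.exp β - α‖ : ℂ)) *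
    ∑ j ∈ Finset.range (min μ k + 1),
      (μ.choose j : ℂ) * ((k.factorial : ℂ) * (ℓ : ℂ) ^ (μ - j) / ((k - j).factorial : ℂ)) *
        β ^ (k - j)

open Finset

lemma prod_descFactorial (k j : ℕ) :
    ∏ i ∈ Finset.range j, ((k : ℂ) - i) = (k.descFactorial j : ℂ) := by
  induction j with
  | zero => simp
  | succ j ih =>
    rw [Finset.prod_range_succ, ih, Nat.descFactorial_succ]
    rcases le_or_gt j k with h | h
    · have : (k : ℂ) - j = ((k - j : ℕ) : ℂ) := by push_cast [h]; ring
      rw [this, ← Nat.cast_mul, mul_comm]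
    · rw [Nat.descFactorial_eq_zero_iff_lt.2 h]
      simp

lemma iteratedDeriv_pow'' (k j : ℕ) (w : ℂ) :
    iteratedDeriv j (fun z : ℂ => z ^ k) w = (k.descFactorial j : ℂ) * w ^ (k - j) := by
  rw [iteratedDeriv_eq_iterate, iter_deriv_pow, prod_descFactorial]

lemma pow_div_factorial_le_exp' {x : ℝ} (hx : 0 ≤ x) (n : ℕ) :
    x ^ n / n.factorial ≤ Real.exp x := by
  calc x ^ n / n.factorial
      ≤ ∑ i ∈ range (n + 1), x ^ i / i.factorial :=
        Finset.single_le_sum (f := fun i => x ^ i / (i.factorial : ℝ))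
          (fun i _ => by positivity) (self_mem_range_succ n)
    _ ≤ Real.exp x := Real.sum_le_exp_of_nonneg hx _

lemma descFactorial_pow_le (k j : ℕ) {x : ℝ} (hx : 0 ≤ x) :
    (k.descFactorial j : ℝ) * x ^ (k - j) ≤ k.factorial * Real.exp x := by
  rcases le_or_gt j k with h | h
  · have h1 : ((k - j).factorial : ℝ) * (k.descFactorial j : ℝ) = (k.factorial : ℝ) := by
      exact_mod_cast congrArg (Nat.cast (R := ℝ)) (Nat.factorial_mul_descFactorial h)
    have hD : (k.descFactorial j : ℝ) = k.factorial / (k - j).factorial :=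
      (eq_div_iff (by positivity)).2 (by rw [← h1]; ring)
    calc (k.descFactorial j : ℝ) * x ^ (k - j)
        = k.factorial * (x ^ (k - j) / (k - j).factorial) := by rw [hD]; ring
      _ ≤ k.factorial * Real.exp x :=
          mul_le_mul_of_nonneg_left (pow_div_factorial_le_exp' hx _) (by positivity)
  · rw [Nat.descFactorial_eq_zero_iff_lt.2 h]
    simp only [Nat.cast_zero, zero_mul]
    positivity



lemma phi_bound (k ℓ μ : ℕ) (w : ℂ) {r : ℝ} (hr : 0 ≤ r) (hw : ‖w‖ ≤ r) :
    ‖iteratedDeriv μ (Phi k ℓ) w‖ ≤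
      (k.factorial : ℝ) * ((ℓ : ℝ) + 1) ^ μ * Real.exp (((ℓ : ℝ) + 1) * r) := by
  have hf : ContDiff ℂ ⊤ (fun z : ℂ => z ^ k) := contDiff_id.pow k
  have hg : ContDiff ℂ ⊤ (fun z : ℂ => Complex.exp ((ℓ : ℂ) * z)) :=
    (contDiff_const.mul contDiff_id).cexp
  have key := norm_iteratedFDeriv_mul_le (𝕜 := ℂ) (n := μ) hf hg w le_top
  have habs : ‖iteratedDeriv μ (Phi k ℓ) w‖
      = ‖iteratedFDeriv ℂ μ (fun z : ℂ => z ^ k * Complex.exp ((ℓ : ℂ) * z)) w‖ := by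
    rw [norm_iteratedFDeriv_eq_norm_iteratedDeriv]
    rfl
  rw [habs]
  refine key.trans ?_
  have hstep : ∀ j ∈ range (μ + 1),
      (μ.choose j : ℝ) * ‖iteratedFDeriv ℂ j (fun z : ℂ => z ^ k) w‖ *
        ‖iteratedFDeriv ℂ (μ - j) (fun z : ℂ => Complex.exp ((ℓ : ℂ) * z)) w‖ ≤
      (μ.choose j : ℝ) * ((k.factorial : ℝ) * Real.exp r) *
        ((ℓ : ℝ) ^ (μ - j) * Real.exp ((ℓ : ℝ) * r)) := by
    intro j _
    have h1 : ‖iteratedFDeriv ℂ j (fun z : ℂ => z ^ k) w‖ ≤ (k.factorial : ℝ) * Real.exp r := by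
      rw [norm_iteratedFDeriv_eq_norm_iteratedDeriv,
        iteratedDeriv_pow'']
      rw [norm_mul, norm_pow]
      calc (‖(k.descFactorial j : ℂ)‖) * ‖w‖ ^ (k - j)
          ≤ (k.descFactorial j : ℝ) * r ^ (k - j) := by
            rw [Complex.norm_natCast]
            exact mul_le_mul_of_nonneg_left (pow_le_pow_left₀ (norm_nonneg w) hw _)
              (by positivity)
        _ ≤ _ := descFactorial_pow_le k j hr
    have h2 : ‖iteratedFDeriv ℂ (μ - j) (fun z : ℂ => Complex.exp ((ℓ : ℂ) * z)) w‖ ≤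
        (ℓ : ℝ) ^ (μ - j) * Real.exp ((ℓ : ℝ) * r) := by
      rw [norm_iteratedFDeriv_eq_norm_iteratedDeriv,
        iteratedDeriv_cexp_const_mul, norm_mul, norm_pow, Complex.norm_natCast,
        Complex.norm_exp]
      refine mul_le_mul_of_nonneg_left ?_ (by positivity)
      refine Real.exp_le_exp.2 ?_
      calc ((ℓ : ℂ) * w).re ≤ ‖(ℓ : ℂ) * w‖ := Complex.re_le_norm _
        _ = (ℓ : ℝ) * ‖w‖ := by rw [norm_mul, Complex.norm_natCast]
        _ ≤ (ℓ : ℝ) * r := by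
            exact mul_le_mul_of_nonneg_left hw (by positivity)
    calc (μ.choose j : ℝ) * ‖iteratedFDeriv ℂ j (fun z : ℂ => z ^ k) w‖ *
          ‖iteratedFDeriv ℂ (μ - j) (fun z : ℂ => Complex.exp ((ℓ : ℂ) * z)) w‖
        ≤ (μ.choose j : ℝ) * ((k.factorial : ℝ) * Real.exp r) *
          ‖iteratedFDeriv ℂ (μ - j) (fun z : ℂ => Complex.exp ((ℓ : ℂ) * z)) w‖ := by
          exact mul_le_mul_of_nonneg_right (mul_le_mul_of_nonneg_left h1 (by positivity))
            (norm_nonneg _)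
      _ ≤ _ := mul_le_mul_of_nonneg_left h2 (by positivity)
  refine (Finset.sum_le_sum hstep).trans ?_
  have hbin : ∑ j ∈ range (μ + 1), (μ.choose j : ℝ) * (ℓ : ℝ) ^ (μ - j) = ((ℓ : ℝ) + 1) ^ μ := by
    have h := add_pow (1 : ℝ) (ℓ : ℝ) μ
    simp only [one_pow, one_mul] at h
    calc ∑ j ∈ range (μ + 1), (μ.choose j : ℝ) * (ℓ : ℝ) ^ (μ - j)
        = ∑ j ∈ range (μ + 1), (ℓ : ℝ) ^ (μ - j) * (μ.choose j : ℝ) :=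
          Finset.sum_congr rfl fun j _ => by ring
      _ = (1 + (ℓ : ℝ)) ^ μ := h.symm
      _ = ((ℓ : ℝ) + 1) ^ μ := by ring
  calc ∑ j ∈ range (μ + 1), (μ.choose j : ℝ) * ((k.factorial : ℝ) * Real.exp r) *
        ((ℓ : ℝ) ^ (μ - j) * Real.exp ((ℓ : ℝ) * r))
      = (k.factorial : ℝ) * (Real.exp r * Real.exp ((ℓ : ℝ) * r)) *
        ∑ j ∈ range (μ + 1), (μ.choose j : ℝ) * (ℓ : ℝ) ^ (μ - j) := by
        rw [Finset.mul_sum]; exact Finset.sum_congr rfl fun j _ => by ring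
    _ ≤ _ := le_of_eq (by rw [hbin, ← Real.exp_add]; ring)


lemma pow_sub_pow_bound {a b : ℂ} {R : ℝ} (ha : ‖a‖ ≤ R) (hb : ‖b‖ ≤ R)
    (hR : 0 ≤ R) (n : ℕ) :
    ‖a ^ n - b ^ n‖ ≤ n * R ^ (n - 1) * ‖a - b‖ := by
  induction n with
  | zero => simp
  | succ n ih =>
    have hsplit : a ^ (n + 1) - b ^ (n + 1) = a * (a ^ n - b ^ n) + (a - b) * b ^ n := by ring
    rw [hsplit, Nat.add_sub_cancel]
    have h1 := norm_add_le (a * (a ^ n - b ^ n)) ((a - b) * b ^ n)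
    rw [norm_mul, norm_mul, norm_pow] at h1
    have h2 : ‖a‖ * ‖a ^ n - b ^ n‖ ≤
        R * ((n : ℝ) * R ^ (n - 1) * ‖a - b‖) :=
      mul_le_mul ha ih (norm_nonneg _) hR
    have h3 : ‖a - b‖ * ‖b‖ ^ n ≤ ‖a - b‖ * R ^ n := by
      have := pow_le_pow_left₀ (norm_nonneg b) hb n
      exact mul_le_mul_of_nonneg_left this (norm_nonneg _)
    have h4 : R * ((n : ℝ) * R ^ (n - 1) * ‖a - b‖) ≤
        (n : ℝ) * R ^ n * ‖a - b‖ := by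
      rcases n with _ | m
      · simp
      · rw [Nat.add_sub_cancel]
        refine le_of_eq ?_
        rw [pow_succ']
        ring
    push_cast
    linarith

lemma haR_lemma (α β : ℂ) :
    ‖α‖ ≤ Real.exp (‖β‖) + ‖Complex.exp β - α‖ := by
  have h0 : α = Complex.exp β - (Complex.exp β - α) := by ring
  calc ‖α‖ ≤ ‖Complex.exp β‖ + ‖Complex.exp β - α‖ := by
        nth_rewrite 1 [h0]
        exact norm_sub_le _ _
    _ ≤ Real.exp (‖β‖) + ‖Complex.exp β - α‖ := by
        rw [Complex.norm_exp]
        have h1 : β.re ≤ ‖β‖ := Complex.re_le_norm β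
        have := Real.exp_le_exp.2 h1
        linarith

lemma binom_sum (ℓ μ : ℕ) :
    ∑ j ∈ range (μ + 1), (μ.choose j : ℝ) * (ℓ : ℝ) ^ (μ - j) = ((ℓ : ℝ) + 1) ^ μ := by
  have h := add_pow (1 : ℝ) (ℓ : ℝ) μ
  simp only [one_pow, one_mul] at h
  calc ∑ j ∈ range (μ + 1), (μ.choose j : ℝ) * (ℓ : ℝ) ^ (μ - j)
      = ∑ j ∈ range (μ + 1), (ℓ : ℝ) ^ (μ - j) * (μ.choose j : ℝ) :=
        Finset.sum_congr rfl fun j _ => by ring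
    _ = (1 + (ℓ : ℝ)) ^ μ := h.symm
    _ = ((ℓ : ℝ) + 1) ^ μ := by ring

lemma wNum_bound (α β : ℂ) (μ k ℓ : ℕ) (hε : 0 < ‖Complex.exp β - α‖) :
    ‖wNum α β μ k ℓ‖ ≤
      (ℓ : ℝ) * (Real.exp (‖β‖) + ‖Complex.exp β - α‖) ^ ℓ *
        ((k.factorial : ℝ) * ((ℓ : ℝ) + 1) ^ μ) := by
  rcases Nat.eq_zero_or_pos ℓ with rfl | hℓ
  · simp [wNum]
  set B := ‖β‖ with hBdef
  set ε := ‖Complex.exp β - α‖ with hedef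
  set R := Real.exp B + ε with hRdef
  have hB0 : 0 ≤ B := norm_nonneg β
  have hexpB : Real.exp B ≤ R := by
    rw [hRdef]; linarith
  have hbR : ‖Complex.exp β‖ ≤ R := by
    rw [Complex.norm_exp]
    have h1 := Real.exp_le_exp.2 (Complex.re_le_norm β)
    linarith
  have hR0 : (0 : ℝ) < R := by positivity
  have hpre : ‖(α ^ ℓ - Complex.exp (β * ℓ)) / (ε : ℂ)‖ ≤ (ℓ : ℝ) * R ^ (ℓ - 1) := by
    rw [norm_div, Complex.norm_real, Real.norm_eq_abs, abs_of_pos hε, div_le_iff₀ hε]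
    have hb : Complex.exp (β * ℓ) = Complex.exp β ^ ℓ := by
      rw [mul_comm, Complex.exp_nat_mul]
    rw [hb]
    have h := pow_sub_pow_bound (haR_lemma α β) hbR (le_of_lt hR0) ℓ
    rw [norm_sub_rev α (Complex.exp β)] at h
    exact h
  have hsum : ‖∑ j ∈ Finset.range (min μ k + 1),
        (μ.choose j : ℂ) * ((k.factorial : ℂ) * (ℓ : ℂ) ^ (μ - j) / ((k - j).factorial : ℂ)) *
          β ^ (k - j)‖ ≤
      (k.factorial : ℝ) * Real.exp B * ((ℓ : ℝ) + 1) ^ μ := by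
    refine (norm_sum_le _ _).trans ?_
    have hterm : ∀ j ∈ range (min μ k + 1),
        ‖(μ.choose j : ℂ) * ((k.factorial : ℂ) * (ℓ : ℂ) ^ (μ - j) /
            ((k - j).factorial : ℂ)) * β ^ (k - j)‖ ≤
        (μ.choose j : ℝ) * (ℓ : ℝ) ^ (μ - j) * ((k.factorial : ℝ) * Real.exp B) := by
      intro j hj
      have hjk : j ≤ k := le_trans (Nat.lt_succ_iff.mp (mem_range.mp hj)) (min_le_right μ k)
      rw [norm_mul, norm_mul, norm_div, norm_mul, norm_pow, norm_pow]
      simp only [Complex.norm_natCast]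
      have h1 : ((k - j).factorial : ℝ) * (k.descFactorial j : ℝ) = (k.factorial : ℝ) := by
        exact_mod_cast congrArg (Nat.cast (R := ℝ)) (Nat.factorial_mul_descFactorial hjk)
      have hD : (k.factorial : ℝ) / ((k - j).factorial : ℝ) = (k.descFactorial j : ℝ) := by
        rw [eq_comm, eq_div_iff (by positivity)]
        rw [← h1]; ring
      have h2 : (k.descFactorial j : ℝ) * B ^ (k - j) ≤ k.factorial * Real.exp B :=
        descFactorial_pow_le k j hB0
      calc (μ.choose j : ℝ) * ((k.factorial : ℝ) * (ℓ : ℝ) ^ (μ - j) /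
              ((k - j).factorial : ℝ)) * B ^ (k - j)
          = (μ.choose j : ℝ) * (ℓ : ℝ) ^ (μ - j) *
              ((k.descFactorial j : ℝ) * B ^ (k - j)) := by
            rw [← hD]; ring
        _ ≤ (μ.choose j : ℝ) * (ℓ : ℝ) ^ (μ - j) * ((k.factorial : ℝ) * Real.exp B) :=
            mul_le_mul_of_nonneg_left h2 (by positivity)
    refine (Finset.sum_le_sum hterm).trans ?_
    calc ∑ j ∈ range (min μ k + 1),
          (μ.choose j : ℝ) * (ℓ : ℝ) ^ (μ - j) * ((k.factorial : ℝ) * Real.exp B)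
        ≤ ∑ j ∈ range (μ + 1),
          (μ.choose j : ℝ) * (ℓ : ℝ) ^ (μ - j) * ((k.factorial : ℝ) * Real.exp B) := by
          refine Finset.sum_le_sum_of_subset_of_nonneg ?_ (fun j _ _ => by positivity)
          exact Finset.range_subset_range.2 (by omega)
      _ = (k.factorial : ℝ) * Real.exp B * ((ℓ : ℝ) + 1) ^ μ := by
          rw [← Finset.sum_mul, binom_sum]; ring
  calc ‖wNum α β μ k ℓ‖
      ≤ ((ℓ : ℝ) * R ^ (ℓ - 1)) * ((k.factorial : ℝ) * Real.exp B * ((ℓ : ℝ) + 1) ^ μ) := by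
        rw [wNum, norm_mul]
        exact mul_le_mul hpre hsum (norm_nonneg _) (by positivity)
    _ ≤ (ℓ : ℝ) * R ^ ℓ * ((k.factorial : ℝ) * ((ℓ : ℝ) + 1) ^ μ) := by
        have hpow : R ^ (ℓ - 1) * Real.exp B ≤ R ^ ℓ := by
          calc R ^ (ℓ - 1) * Real.exp B ≤ R ^ (ℓ - 1) * R :=
                mul_le_mul_of_nonneg_left hexpB (by positivity)
            _ = R ^ ℓ := by
                rw [← pow_succ]
                congr 1
                omega
        calc ((ℓ : ℝ) * R ^ (ℓ - 1)) * ((k.factorial : ℝ) * Real.exp B * ((ℓ : ℝ) + 1) ^ μ)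
            = (R ^ (ℓ - 1) * Real.exp B) * ((ℓ : ℝ) * ((k.factorial : ℝ) * ((ℓ : ℝ) + 1) ^ μ)) := by
              ring
          _ ≤ R ^ ℓ * ((ℓ : ℝ) * ((k.factorial : ℝ) * ((ℓ : ℝ) + 1) ^ μ)) :=
              mul_le_mul_of_nonneg_right hpow (by positivity)
          _ = (ℓ : ℝ) * R ^ ℓ * ((k.factorial : ℝ) * ((ℓ : ℝ) + 1) ^ μ) := by ring

lemma sum_factorial_le (n : ℕ) :
    ∑ k ∈ Finset.range (n + 1), (k.factorial : ℝ) ≤ 2 * n.factorial := by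
  induction n with
  | zero => norm_num
  | succ n ih =>
    rw [Finset.sum_range_succ]
    rcases Nat.eq_zero_or_pos n with rfl | hn
    · norm_num [Finset.sum_range_succ]
    · have h2 : (2 : ℝ) * n.factorial ≤ ((n + 1).factorial : ℝ) := by
        rw [Nat.factorial_succ]
        push_cast
        have e1 : (1 : ℝ) ≤ (n.factorial : ℝ) :=
          Nat.one_le_cast.mpr (Nat.one_le_iff_ne_zero.2 (Nat.factorial_ne_zero n))
        have e2 : (1 : ℝ) ≤ (n : ℝ) := Nat.one_le_cast.mpr hn
        nlinarith
      linarith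

lemma final_sum {K L μ : ℕ} (hK : 1 ≤ K) (f : ℕ → ℕ → ℝ) (C : ℝ) (hC : 0 ≤ C)
    (hf : ∀ k ∈ range K, ∀ ℓ ∈ range L, f k ℓ ≤ (k.factorial : ℝ) * (L : ℝ) ^ μ * C) :
    ∑ k ∈ range K, ∑ ℓ ∈ range L, f k ℓ ≤
      2 * ((K - 1).factorial : ℝ) * ((L : ℝ) + 1) ^ (μ + 1) * C := by
  obtain ⟨K', rfl⟩ : ∃ K', K = K' + 1 := ⟨K - 1, (Nat.succ_pred_eq_of_pos hK).symm⟩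
  have step1 : ∑ k ∈ range (K' + 1), ∑ ℓ ∈ range L, f k ℓ ≤
      ∑ k ∈ range (K' + 1), (k.factorial : ℝ) * ((L : ℝ) ^ (μ + 1) * C) := by
    refine Finset.sum_le_sum fun k hk => ?_
    calc ∑ ℓ ∈ range L, f k ℓ ≤ ∑ _ℓ ∈ range L, (k.factorial : ℝ) * (L : ℝ) ^ μ * C :=
          Finset.sum_le_sum (hf k hk)
      _ = (L : ℝ) * ((k.factorial : ℝ) * (L : ℝ) ^ μ * C) := by
          rw [Finset.sum_const, Finset.card_range, nsmul_eq_mul]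
      _ = (k.factorial : ℝ) * ((L : ℝ) ^ (μ + 1) * C) := by rw [pow_succ]; ring
  refine step1.trans ?_
  rw [← Finset.sum_mul]
  have h1 : ∑ k ∈ range (K' + 1), (k.factorial : ℝ) ≤ 2 * K'.factorial := sum_factorial_le K'
  have h2 : (L : ℝ) ^ (μ + 1) ≤ ((L : ℝ) + 1) ^ (μ + 1) :=
    pow_le_pow_left₀ (by positivity) (by linarith) _
  have h3 : (0 : ℝ) ≤ (L : ℝ) ^ (μ + 1) * C := by positivity
  calc (∑ k ∈ range (K' + 1), (k.factorial : ℝ)) * ((L : ℝ) ^ (μ + 1) * C)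
      ≤ (2 * K'.factorial) * ((L : ℝ) ^ (μ + 1) * C) := mul_le_mul_of_nonneg_right h1 h3
    _ ≤ (2 * K'.factorial) * (((L : ℝ) + 1) ^ (μ + 1) * C) := by
        refine mul_le_mul_of_nonneg_left ?_ (by positivity)
        exact mul_le_mul_of_nonneg_right h2 hC
    _ = 2 * ((K' + 1 - 1).factorial : ℝ) * ((L : ℝ) + 1) ^ (μ + 1) * C := by
        rw [Nat.add_sub_cancel]; ring

theorem stmt19 (α β : ℂ) (hβ : β ≠ 0) (hε : 0 < ‖Complex.exp β - α‖)
    (E : ℝ) (hE : 1 < E) (K L : ℕ) (hK : 1 ≤ K) (hL : 2 ≤ L) (μ : ℕ) :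
    max
      (∑ k ∈ Finset.range K, ∑ ℓ ∈ Finset.range L,
        ⨆ z : Metric.sphere (0 : ℂ) E, ‖iteratedDeriv μ (Phi k ℓ) ((z : ℂ) * β)‖)
      (∑ k ∈ Finset.range K, ∑ ℓ ∈ Finset.range L, ‖wNum α β μ k ℓ‖) ≤
    Real.exp
      (max (E * ‖β‖ * L)
          (Real.log ((L : ℝ) - 1) +
            ((L : ℝ) - 1) *
              Real.log (Real.exp (‖β‖) + ‖Complex.exp β - α‖)) +
        Real.log ((K - 1).factorial) + ((μ : ℝ) + 1) * Real.log ((L : ℝ) + 1) +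
        Real.log 2) := by
  set B := ‖β‖ with hBdef
  set ε := ‖Complex.exp β - α‖ with hedef
  set R := Real.exp B + ε with hRdef
  set M := max (E * B * L) (Real.log ((L : ℝ) - 1) + ((L : ℝ) - 1) * Real.log R) with hMdef
  have hB0 : 0 ≤ B := norm_nonneg β
  have hE0 : (0 : ℝ) < E := lt_trans one_pos hE
  have hR0 : (0 : ℝ) < R := by positivity
  have hR1 : (1 : ℝ) ≤ R := by
    have := Real.one_le_exp hB0
    rw [hRdef]; linarith
  have hL2 : (2 : ℝ) ≤ (L : ℝ) := by exact_mod_cast hL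
  have hLcast : ((L - 1 : ℕ) : ℝ) = (L : ℝ) - 1 := by
    rw [Nat.cast_sub (by omega)]; norm_num
  -- RHS simplification
  have hRHS : Real.exp (M + Real.log ((K - 1).factorial) + ((μ : ℝ) + 1) * Real.log ((L : ℝ) + 1) +
      Real.log 2) =
      2 * (((K - 1).factorial : ℕ) : ℝ) * ((L : ℝ) + 1) ^ (μ + 1) * Real.exp M := by
    rw [Real.exp_add, Real.exp_add, Real.exp_add]
    have e1 : Real.exp (Real.log ((K - 1).factorial)) = (((K - 1).factorial : ℕ) : ℝ) :=
      Real.exp_log (by exact_mod_cast Nat.factorial_pos (K - 1))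
    have e2 : Real.exp (((μ : ℝ) + 1) * Real.log ((L : ℝ) + 1)) = ((L : ℝ) + 1) ^ (μ + 1) := by
      have : ((μ : ℝ) + 1) = ((μ + 1 : ℕ) : ℝ) := by push_cast; ring
      rw [this, Real.exp_nat_mul, Real.exp_log (by positivity)]
    rw [e1, e2, Real.exp_log two_pos]
    ring
  rw [hRHS]
  have hC1 : Real.exp (E * B * (L : ℝ)) ≤ Real.exp M :=
    Real.exp_le_exp.2 (le_max_left _ _)
  have hC2 : ((L : ℝ) - 1) * R ^ (L - 1) ≤ Real.exp M := by
    refine le_trans (le_of_eq ?_) (Real.exp_le_exp.2 (le_max_right _ _))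
    rw [Real.exp_add, Real.exp_log (by linarith), ← hLcast, Real.exp_nat_mul,
      Real.exp_log hR0]
  refine max_le ?_ ?_
  · -- first sum
    refine le_trans (final_sum (μ := μ) hK _ (Real.exp (E * B * L)) (le_of_lt (Real.exp_pos _))
      ?_) ?_
    · intro k hk ℓ hℓ
      have hℓL : ℓ < L := mem_range.mp hℓ
      refine Real.iSup_le (fun z => ?_) (by positivity)
      have hz : ‖(z : ℂ) * β‖ ≤ E * B := by
        rw [norm_mul, ← hBdef]
        have hzE : ‖(z : ℂ)‖ = E := by
          have := z.2
          rw [Metric.mem_sphere, Complex.dist_eq, sub_zero] at this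
          exact this
        rw [hzE]
      have h := phi_bound k ℓ μ ((z : ℂ) * β) (by positivity) hz
      refine h.trans ?_
      have hp1 : ((ℓ : ℝ) + 1) ^ μ ≤ (L : ℝ) ^ μ :=
        pow_le_pow_left₀ (by positivity) (by exact_mod_cast Nat.succ_le_of_lt hℓL) μ
      have hp2 : Real.exp (((ℓ : ℝ) + 1) * (E * B)) ≤ Real.exp (E * B * L) := by
        refine Real.exp_le_exp.2 ?_
        have h5 : ((ℓ : ℝ) + 1) ≤ (L : ℝ) := by exact_mod_cast Nat.succ_le_of_lt hℓL
        have h6 : (0 : ℝ) ≤ E * B := by positivity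
        nlinarith
      calc (k.factorial : ℝ) * ((ℓ : ℝ) + 1) ^ μ * Real.exp (((ℓ : ℝ) + 1) * (E * B))
          ≤ (k.factorial : ℝ) * (L : ℝ) ^ μ * Real.exp (((ℓ : ℝ) + 1) * (E * B)) := by
            refine mul_le_mul_of_nonneg_right (mul_le_mul_of_nonneg_left hp1 (by positivity))
              (le_of_lt (Real.exp_pos _))
        _ ≤ (k.factorial : ℝ) * (L : ℝ) ^ μ * Real.exp (E * B * L) :=
            mul_le_mul_of_nonneg_left hp2 (by positivity)
    · exact mul_le_mul_of_nonneg_left hC1 (by positivity)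
  · -- second sum
    refine le_trans (final_sum (μ := μ) hK _ (((L : ℝ) - 1) * R ^ (L - 1))
      (mul_nonneg (by linarith) (le_of_lt (pow_pos hR0 _))) ?_) ?_
    · intro k hk ℓ hℓ
      have hℓL : ℓ < L := mem_range.mp hℓ
      have h := wNum_bound α β μ k ℓ hε
      refine h.trans ?_
      have ha1 : (ℓ : ℝ) ≤ (L : ℝ) - 1 := by
        have : (ℓ : ℝ) + 1 ≤ (L : ℝ) := by exact_mod_cast Nat.succ_le_of_lt hℓL
        linarith
      have ha2 : R ^ ℓ ≤ R ^ (L - 1) := pow_le_pow_right₀ hR1 (by omega)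
      have ha3 : ((ℓ : ℝ) + 1) ^ μ ≤ (L : ℝ) ^ μ :=
        pow_le_pow_left₀ (by positivity) (by exact_mod_cast Nat.succ_le_of_lt hℓL) μ
      calc (ℓ : ℝ) * R ^ ℓ * ((k.factorial : ℝ) * ((ℓ : ℝ) + 1) ^ μ)
          ≤ (((L : ℝ) - 1) * R ^ (L - 1)) * ((k.factorial : ℝ) * (L : ℝ) ^ μ) := by
            refine mul_le_mul ?_ ?_ (by positivity)
              (mul_nonneg (by linarith) (le_of_lt (pow_pos hR0 _)))
            · exact mul_le_mul ha1 ha2 (by positivity) (by linarith)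
            · exact mul_le_mul_of_nonneg_left ha3 (by positivity)
        _ = (k.factorial : ℝ) * (L : ℝ) ^ μ * (((L : ℝ) - 1) * R ^ (L - 1)) := by ring
    · exact mul_le_mul_of_nonneg_left hC2 (by positivity)
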